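/- For real μ > 0, the Fourier transform of s ↦ (cosh s)^{-μ} over R is ξ ↦ (2^{μ-1}/√(2π)) · Γ((μ+iξ)/2) Γ((μ-iξ)/2) / Γ(μ), i.e. (1/√(2π)) ∫_R (cosh s)^{-μ} e^{-isξ} ds = (2^{μ-1}/√(2π)) B((μ+iξ)/2, (μ-iξ)/2) · Γ(μ)/Γ(μ) expressed via the Beta function B. -/

import Mathlib

open MeasureTheory Complex Set

noncomputable def gmap (x : ℝ) : ℝ := (Real.log x - Real.log (1 - x)) / 2

lemma gmap_deriv {x : ℝ} (hx : x ∈ Ioo (0:ℝ) 1) :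
    HasDerivWithinAt gmap (1 / (2 * x * (1 - x))) (Ioo (0:ℝ) 1) x := by
  obtain ⟨hx0, hx1⟩ := hx
  have h1x : (0:ℝ) < 1 - x := by linarith
  have h1 : HasDerivAt Real.log x⁻¹ x := Real.hasDerivAt_log hx0.ne'
  have h2 : HasDerivAt (fun y : ℝ => Real.log (1 - y)) ((1 - x)⁻¹ * (-1)) x :=
    (Real.hasDerivAt_log h1x.ne').comp x ((hasDerivAt_id x).const_sub 1)
  have h3 := (h1.sub h2).div_const 2
  have : (x⁻¹ - (1 - x)⁻¹ * (-1)) / 2 = 1 / (2 * x * (1 - x)) := by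
    field_simp; ring
  rw [this] at h3
  exact h3.hasDerivWithinAt

lemma gmap_inj : InjOn gmap (Ioo (0:ℝ) 1) := by
  have : StrictMonoOn gmap (Ioo (0:ℝ) 1) := by
    intro x hx y hy hxy
    have l1 : Real.log x < Real.log y := Real.log_lt_log hx.1 hxy
    have l2 : Real.log (1 - y) < Real.log (1 - x) :=
      Real.log_lt_log (by linarith [hy.2]) (by linarith)
    unfold gmap; linarith
  exact this.injOn

lemma gmap_surj : gmap '' (Ioo (0:ℝ) 1) = univ := by
  ext s
  simp only [mem_image, mem_univ, iff_true]
  refine ⟨Real.exp (2*s) / (1 + Real.exp (2*s)), ⟨?_, ?_⟩, ?_⟩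
  · positivity
  · rw [div_lt_one (by positivity)]; linarith
  · have he : (0:ℝ) < Real.exp (2*s) := Real.exp_pos _
    have hd : (0:ℝ) < 1 + Real.exp (2*s) := by positivity
    have h1 : 1 - Real.exp (2*s) / (1 + Real.exp (2*s)) = 1 / (1 + Real.exp (2*s)) := by
      field_simp; ring
    unfold gmap
    rw [h1, ← Real.log_div (by positivity) (by positivity)]
    have h2 : Real.exp (2*s) / (1 + Real.exp (2*s)) / (1 / (1 + Real.exp (2*s)))
        = Real.exp (2*s) := by field_simp
    rw [h2, Real.log_exp]; ring

lemma cosh_gmap {x : ℝ} (hx : x ∈ Ioo (0:ℝ) 1) :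
    Real.cosh (gmap x) = 1 / (2 * Real.sqrt (x * (1 - x))) := by
  obtain ⟨hx0, hx1⟩ := hx
  have h1x : (0:ℝ) < 1 - x := by linarith
  have ha : (0:ℝ) < Real.sqrt x := Real.sqrt_pos.mpr hx0
  have hb : (0:ℝ) < Real.sqrt (1 - x) := Real.sqrt_pos.mpr h1x
  have e1 : Real.exp (gmap x) = Real.sqrt x / Real.sqrt (1 - x) := by
    unfold gmap
    rw [Real.exp_half, Real.exp_sub, Real.exp_log hx0, Real.exp_log h1x,
      Real.sqrt_div hx0.le]
  have e2 : Real.exp (-gmap x) = Real.sqrt (1 - x) / Real.sqrt x := by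
    rw [Real.exp_neg, e1, inv_div]
  rw [Real.cosh_eq, e1, e2, Real.sqrt_mul hx0.le]
  have hax : Real.sqrt x * Real.sqrt x = x := Real.mul_self_sqrt hx0.le
  have hbx : Real.sqrt (1-x) * Real.sqrt (1-x) = 1 - x := Real.mul_self_sqrt h1x.le
  field_simp
  nlinarith [hax, hbx]

lemma pointwise (μ ξ : ℝ) {x : ℝ} (hx : x ∈ Ioo (0:ℝ) 1) :
    |1 / (2 * x * (1 - x))| • (((Real.cosh (gmap x) ^ (-μ) : ℝ) : ℂ) *
        Complex.exp (-Complex.I * (gmap x : ℂ) * (ξ : ℂ))) =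
    (((2:ℝ) ^ (μ - 1) : ℝ) : ℂ) *
      ((x:ℂ) ^ ((((μ:ℂ) - Complex.I * ξ) / 2) - 1) *
       (1 - (x:ℂ)) ^ ((((μ:ℂ) + Complex.I * ξ) / 2) - 1)) := by
  obtain ⟨hx0, hx1⟩ := hx
  have h1x : (0:ℝ) < 1 - x := by linarith
  have hxc : (x:ℂ) ≠ 0 := ofReal_ne_zero.mpr hx0.ne'
  have hcast : (1 : ℂ) - (x:ℂ) = ((1 - x : ℝ) : ℂ) := by push_cast; ring
  have h1xc : (1:ℂ) - (x:ℂ) ≠ 0 := by rw [hcast]; exact ofReal_ne_zero.mpr h1x.ne'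
  -- real rpow computation
  have hR : Real.cosh (gmap x) ^ (-μ) = 2 ^ μ * (x ^ (μ/2) * (1-x) ^ (μ/2)) := by
    rw [cosh_gmap ⟨hx0, hx1⟩, one_div, Real.inv_rpow (by positivity), Real.rpow_neg
      (by positivity), inv_inv, Real.mul_rpow (by norm_num) (Real.sqrt_nonneg _),
      Real.sqrt_eq_rpow, ← Real.rpow_mul (by nlinarith), Real.mul_rpow hx0.le h1x.le,
      show (1:ℝ)/2*μ = μ/2 from by ring]
  -- complex exponential split
  have c3 : Complex.exp (-Complex.I * (gmap x:ℂ) * ξ) =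
      Complex.exp (Complex.log x * -(Complex.I*ξ/2)) *
      Complex.exp (Complex.log ((1-x:ℝ):ℂ) * (Complex.I*ξ/2)) := by
    rw [← Complex.exp_add, ← Complex.ofReal_log hx0.le, ← Complex.ofReal_log h1x.le]
    congr 1
    unfold gmap; push_cast; ring
  have c1 : (x:ℂ) ^ ((((μ:ℂ) - Complex.I * ξ) / 2) - 1) =
      ((x ^ (μ/2 - 1) : ℝ) : ℂ) * Complex.exp (Complex.log x * -(Complex.I*ξ/2)) := by
    have he : (((μ:ℂ) - Complex.I * ξ) / 2) - 1 = ((μ/2 - 1 : ℝ) : ℂ) + (-(Complex.I*ξ/2)) := by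
      push_cast; ring
    rw [he, cpow_add _ _ hxc, ← Complex.ofReal_cpow hx0.le,
      Complex.cpow_def_of_ne_zero hxc]
  have c2 : (1 - (x:ℂ)) ^ ((((μ:ℂ) + Complex.I * ξ) / 2) - 1) =
      (((1-x) ^ (μ/2 - 1) : ℝ) : ℂ) *
        Complex.exp (Complex.log ((1-x:ℝ):ℂ) * (Complex.I*ξ/2)) := by
    have he : (((μ:ℂ) + Complex.I * ξ) / 2) - 1 = ((μ/2 - 1 : ℝ) : ℂ) + (Complex.I*ξ/2) := by
      push_cast; ring
    rw [hcast, he, cpow_add _ _ (hcast ▸ h1xc), ← Complex.ofReal_cpow h1x.le,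
      Complex.cpow_def_of_ne_zero (hcast ▸ h1xc)]
  have habs : |1 / (2 * x * (1 - x))| = 1 / (2 * x * (1 - x)) :=
    abs_of_pos (by positivity)
  have key : (1 / (2*x*(1-x))) * (2^μ * (x^(μ/2)*(1-x)^(μ/2))) =
      2^(μ-1) * (x^(μ/2-1) * (1-x)^(μ/2-1)) := by
    rw [Real.rpow_sub (by norm_num : (0:ℝ) < 2), Real.rpow_sub hx0, Real.rpow_sub h1x,
      Real.rpow_one, Real.rpow_one, Real.rpow_one]
    field_simp
  rw [habs, hR, c1, c2, c3, Complex.real_smul]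
  have hc : ((1 / (2*x*(1-x)) : ℝ) : ℂ) * ((2^μ * (x^(μ/2)*(1-x)^(μ/2)) : ℝ) : ℂ)
      = ((2^(μ-1) : ℝ) : ℂ) * ((x^(μ/2-1) : ℝ):ℂ) * (((1-x)^(μ/2-1) : ℝ):ℂ) := by
    rw [← Complex.ofReal_mul, key]; push_cast; ring
  linear_combination (Complex.exp (Complex.log x * -(Complex.I*ξ/2)) *
    Complex.exp (Complex.log ((1-x:ℝ):ℂ) * (Complex.I*ξ/2))) * hc

/-- For `μ > 0`, the Fourier transform of `s ↦ (cosh s)^{-μ}` (with convention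
`f̂(ξ) = (1/√(2π)) ∫ f(s) e^{-isξ} ds`) equals
`(2^{μ-1}/√(2π)) Γ((μ+iξ)/2) Γ((μ-iξ)/2) / Γ(μ)`. -/
theorem statement15 (μ : ℝ) (hμ : 0 < μ) (ξ : ℝ) :
    ((1 / Real.sqrt (2 * Real.pi) : ℝ) : ℂ) *
        ∫ s : ℝ, ((Real.cosh s ^ (-μ) : ℝ) : ℂ) *
          Complex.exp (-Complex.I * (s : ℂ) * (ξ : ℂ)) =
      (((2 : ℝ) ^ (μ - 1) / Real.sqrt (2 * Real.pi) : ℝ) : ℂ) *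
        (Complex.Gamma (((μ : ℂ) + Complex.I * (ξ : ℂ)) / 2) *
          Complex.Gamma (((μ : ℂ) - Complex.I * (ξ : ℂ)) / 2)) /
        Complex.Gamma (μ : ℂ) := by
  have hu : 0 < ((((μ:ℂ) - Complex.I * ξ) / 2)).re := by
    simp [Complex.div_re, Complex.sub_re, Complex.mul_re]
    positivity
  have hv : 0 < ((((μ:ℂ) + Complex.I * ξ) / 2)).re := by
    simp [Complex.div_re, Complex.add_re, Complex.mul_re]
    positivity
  have huv : (((μ:ℂ) - Complex.I * ξ) / 2) + (((μ:ℂ) + Complex.I * ξ) / 2) = (μ:ℂ) := by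
    ring
  have hbeta := Complex.Gamma_mul_Gamma_eq_betaIntegral hu hv
  rw [huv] at hbeta
  have hΓ : Complex.Gamma (μ:ℂ) ≠ 0 :=
    Complex.Gamma_ne_zero_of_re_pos (by simpa using hμ)
  have hInt : (∫ s : ℝ, ((Real.cosh s ^ (-μ) : ℝ) : ℂ) *
          Complex.exp (-Complex.I * (s : ℂ) * (ξ : ℂ)))
      = (((2:ℝ) ^ (μ - 1) : ℝ) : ℂ) *
        Complex.betaIntegral (((μ:ℂ) - Complex.I * ξ) / 2) (((μ:ℂ) + Complex.I * ξ) / 2) := by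
    rw [← setIntegral_univ, ← gmap_surj,
      integral_image_eq_integral_abs_deriv_smul measurableSet_Ioo
        (fun x hx => gmap_deriv hx) gmap_inj]
    rw [setIntegral_congr_fun measurableSet_Ioo (fun x hx => pointwise μ ξ hx),
      integral_const_mul]
    congr 1
    rw [Complex.betaIntegral, intervalIntegral.integral_of_le zero_le_one,
      integral_Ioc_eq_integral_Ioo]
  rw [hInt]
  have hb : Complex.betaIntegral (((μ:ℂ) - Complex.I * ξ) / 2) (((μ:ℂ) + Complex.I * ξ) / 2)
      = Complex.Gamma (((μ:ℂ) - Complex.I * ξ) / 2) *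
        Complex.Gamma (((μ:ℂ) + Complex.I * ξ) / 2) / Complex.Gamma (μ:ℂ) := by
    rw [eq_div_iff hΓ, hbeta]; ring
  rw [hb, Complex.ofReal_div]
  have hs : ((Real.sqrt (2*Real.pi) : ℝ) : ℂ) ≠ 0 := by
    exact_mod_cast (Real.sqrt_pos.mpr (by positivity)).ne'
  push_cast
  field_simp
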